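/- Let σ=(Σ_i)_{i∈[k]} be a trace alphabet and κ, κ' capacity functions for k buffers. Suppose there exist i ∈ [k] and letters a, b ∈ Σ such that σ(a) = {i}, σ(a) ∩ σ(b) = ∅, κ(i) ∈ ℕ is finite and κ(i) < κ'(i). Then there exist nondeterministic Büchi automata A and B over Σ such that A ⋢^κ_σ B (Duplicator has no winning strategy in G^κ_σ(A,B); indeed Spoiler wins) but A ⊑^{κ'}_σ B. -/

import Mathlib

open Classical

noncomputable section

namespace MultiBuffer

/-! ### Nondeterministic Büchi automata -/

/-- A nondeterministic Büchi automaton over the alphabet `α`. -/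
structure NBA (α : Type) : Type 1 where
  Q : Type
  finQ : Fintype Q
  init : Q
  δ : Q → α → Set Q
  F : Set Q

variable {α P Q : Type} {k : ℕ}

/-- `r` is (the state sequence of) a run of `A` on the infinite word `w`. -/
def IsRun (A : NBA α) (w : ℕ → α) (r : ℕ → A.Q) : Prop :=
  r 0 = A.init ∧ ∀ n, r (n + 1) ∈ A.δ (r n) (w n)

/-- The state sequence `r` visits accepting states infinitely often. -/
def AcceptingStates (A : NBA α) (r : ℕ → A.Q) : Prop :=
  {n | r n ∈ A.F}.Infinite

/-- The ω-language of a Büchi automaton. -/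
def Lang (A : NBA α) : Set (ℕ → α) :=
  {w | ∃ r, IsRun A w r ∧ AcceptingStates A r}

/-! ### Finite or infinite words, projections and trace equivalence

A finite or infinite word over `α` is represented as a function `ℕ → Option α`
which is `none` from some point on (if finite); infinite words embed via `ofInf`. -/

/-- The infinite word `u` viewed as an element of `Σ^∞`. -/
def ofInf (u : ℕ → α) : ℕ → Option α := fun n => some (u n)

/-- A function `ℕ → Option α` represents a finite or infinite word if after the
first `none` everything is `none`. -/
def Stable (w : ℕ → Option α) : Prop := ∀ n, w n = none → w (n + 1) = none

/-- The number of `i < j` satisfying `p`. -/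
def countBelow (p : ℕ → Prop) (j : ℕ) : ℕ := {i | i < j ∧ p i}.ncard

/-- Position `j` of the word `w` carries a letter belonging to `S`. -/
def InS (S : Set α) (w : ℕ → Option α) (j : ℕ) : Prop := ∃ a ∈ S, w j = some a

/-- The projection `π_S(w)` of the word `w` to the subalphabet `S`: the word obtained
from `w` by deleting all letters not in `S`. -/
def proj (S : Set α) (w : ℕ → Option α) (n : ℕ) : Option α :=
  if h : ∃ j, InS S w j ∧ countBelow (InS S w) j = n then w h.choose else none

/-- Trace equivalence of (finite or infinite) words w.r.t. the trace alphabet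
`σ = (Σ_i)_{i ∈ [k]}` : all projections coincide. -/
def TraceEquiv (σ : Fin k → Set α) (u v : ℕ → Option α) : Prop :=
  ∀ i, proj (σ i) u = proj (σ i) v

/-- The trace closure of a language of infinite words. -/
def closure (σ : Fin k → Set α) (L : Set (ℕ → α)) : Set (ℕ → α) :=
  {v | ∃ u ∈ L, TraceEquiv σ (ofInf u) (ofInf v)}

/-! ### The multi-buffer game -/

/-- A configuration of the multi-buffer game: a state of Spoiler's automaton,
the contents of the `k` buffers, and a state of Duplicator's automaton. -/
structure Conf (α P Q : Type) (k : ℕ) where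
  p : P
  bufs : Fin k → List α
  q : Q

/-- Appending the letter `a` to the back of every buffer `i` with `a ∈ σ i`. -/
def push (σ : Fin k → Set α) (bufs : Fin k → List α) (a : α) : Fin k → List α :=
  fun i => if a ∈ σ i then bufs i ++ [a] else bufs i

/-- Popping the letter `b` from the front of every buffer `i` with `b ∈ σ i`. -/
def pop (σ : Fin k → Set α) (bufs : Fin k → List α) (b : α) : Fin k → List α :=
  fun i => if b ∈ σ i then (bufs i).tail else bufs i

/-- Effect of a Spoiler move `m = (a, p')` on a configuration. -/
def spApply (σ : Fin k → Set α) (c : Conf α P Q k) (m : α × P) : Conf α P Q k :=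
  ⟨m.2, push σ c.bufs m.1, c.q⟩

/-- Effect of a (possibly empty) Duplicator move `d = (b₁,q₁)...(b_n,q_n)`. -/
def dupApply (σ : Fin k → Set α) (c : Conf α P Q k) (d : List (α × Q)) : Conf α P Q k :=
  ⟨c.p, d.foldl (fun bs m => pop σ bs m.1) c.bufs, ((d.getLast?).map Prod.snd).getD c.q⟩

/-- Legality of a Spoiler move: it follows a transition of his automaton. -/
def SpLegal (δA : P → α → Set P) (c : Conf α P Q k) (m : α × P) : Prop :=
  m.2 ∈ δA c.p m.1

/-- Legality of a Duplicator move from a configuration: the moves form a run of her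
automaton and each letter is removed from the front of the corresponding buffers. -/
def DupLegal (σ : Fin k → Set α) (δB : Q → α → Set Q) :
    Conf α P Q k → List (α × Q) → Prop
  | _, [] => True
  | c, m :: rest =>
      m.2 ∈ δB c.q m.1 ∧ (∀ i, m.1 ∈ σ i → (c.bufs i).head? = some m.1) ∧
      DupLegal σ δB ⟨c.p, pop σ c.bufs m.1, m.2⟩ rest

/-- The capacity constraints (checked after a full round). -/
def CapOk (κ : Fin k → ℕ∞) (c : Conf α P Q k) : Prop :=
  ∀ i, ((c.bufs i).length : ℕ∞) ≤ κ i

/-- The list of the first `n` values of the sequence `s`. -/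
def hist {β : Type} (s : ℕ → β) (n : ℕ) : List β := List.ofFn (fun i : Fin n => s i)

/-- The configuration of the play after `n` full rounds, when Spoiler plays the
sequence `s` of moves and Duplicator follows the strategy `θ` (which maps the
history of Spoiler moves, including the current one, to her response). -/
def playConf (σ : Fin k → Set α) (θ : List (α × P) → List (α × Q))
    (c0 : Conf α P Q k) (s : ℕ → α × P) : ℕ → Conf α P Q k
  | 0 => c0
  | n + 1 => dupApply σ (spApply σ (playConf σ θ c0 s n) (s n)) (θ (hist s (n + 1)))

/-- Duplicator's response in round `n`. -/
def resp (θ : List (α × P) → List (α × Q)) (s : ℕ → α × P) (n : ℕ) : List (α × Q) :=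
  θ (hist s (n + 1))

/-- Spoiler's move in round `n` is legal. -/
def SpLegalAt (σ : Fin k → Set α) (δA : P → α → Set P) (θ : List (α × P) → List (α × Q))
    (c0 : Conf α P Q k) (s : ℕ → α × P) (n : ℕ) : Prop :=
  SpLegal δA (playConf σ θ c0 s n) (s n)

/-- Duplicator's response in round `n` is legal and the capacities are respected
after the round. -/
def DupOkAt (σ : Fin k → Set α) (κ : Fin k → ℕ∞) (δB : Q → α → Set Q)
    (θ : List (α × P) → List (α × Q)) (c0 : Conf α P Q k) (s : ℕ → α × P) (n : ℕ) : Prop :=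
  DupLegal σ δB (spApply σ (playConf σ θ c0 s n) (s n)) (resp θ s n) ∧
  CapOk κ (playConf σ θ c0 s (n + 1))

/-- The number of occurrences of the letter `a` in Spoiler's word. -/
def spOcc (s : ℕ → α × P) (a : α) : ℕ∞ := {n | (s n).1 = a}.encard

/-- The number of occurrences of the letter `a` in Duplicator's word. -/
def dupOcc (θ : List (α × P) → List (α × Q)) (s : ℕ → α × P) (a : α) : ℕ∞ :=
  {x : ℕ × ℕ | ∃ m, (resp θ s x.1)[x.2]? = some m ∧ m.1 = a}.encard

/-- Spoiler's run is accepting. -/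
def SpAccept (FA : Set P) (s : ℕ → α × P) : Prop := {n | (s n).2 ∈ FA}.Infinite

/-- Duplicator's run is (infinite and) accepting. -/
def DupAccept (FB : Set Q) (θ : List (α × P) → List (α × Q)) (s : ℕ → α × P) : Prop :=
  {n | ∃ m ∈ resp θ s n, m.2 ∈ FB}.Infinite

/-- Duplicator has a winning strategy in the multi-buffer game (with buffer alphabets
`σ`, capacities `κ`) played on the transition structures `δA`, `δB` with acceptance
sets `FA`, `FB`, starting from the configuration `c0`: she always has legal responses
(as long as Spoiler has played legally), and if the resulting infinite play carries an
accepting run of Spoiler then her own run is infinite and accepting and every letter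
occurs equally often in both words (i.e. every letter put into a buffer is eventually
read). Finite plays in which a player is stuck are lost by that player. -/
def DupWinsFrom (σ : Fin k → Set α) (κ : Fin k → ℕ∞) (δA : P → α → Set P)
    (δB : Q → α → Set Q) (FA : Set P) (FB : Set Q) (c0 : Conf α P Q k) : Prop :=
  ∃ θ : List (α × P) → List (α × Q),
    ∀ s : ℕ → α × P,
      (∀ n, (∀ m ≤ n, SpLegalAt σ δA θ c0 s m) → DupOkAt σ κ δB θ c0 s n) ∧
      ((∀ n, SpLegalAt σ δA θ c0 s n) → SpAccept FA s →
        DupAccept FB θ s ∧ ∀ a : α, spOcc s a = dupOcc θ s a)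

/-- The multi-buffer simulation `A ⊑^κ_σ B`. -/
def Simu (σ : Fin k → Set α) (κ : Fin k → ℕ∞) (A B : NBA α) : Prop :=
  DupWinsFrom σ κ A.δ B.δ A.F B.F ⟨A.init, fun _ => [], B.init⟩


/-! ### Auxiliary constructions for the strictness theorem -/

section Strict

variable {α : Type} {k : ℕ}

/-- Spoiler's automaton: accepts exactly `a^{N+1} b^ω`. -/
def AutA (N : ℕ) (a b : α) : NBA α where
  Q := Fin (N+3)
  finQ := inferInstance
  init := ⟨0, by omega⟩
  δ := fun q x => {q' | (q.val ≤ N ∧ x = a ∧ q'.val = q.val + 1) ∨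
      (N + 1 ≤ q.val ∧ x = b ∧ q'.val = N + 2)}
  F := {q | q.val = N + 2}

/-- Duplicator's automaton: accepts exactly `b a^{N+1} b^ω`. -/
def AutB (N : ℕ) (a b : α) : NBA α where
  Q := Fin (N+4)
  finQ := inferInstance
  init := ⟨0, by omega⟩
  δ := fun q x => {q' | (q.val = 0 ∧ x = b ∧ q'.val = 1) ∨
      (1 ≤ q.val ∧ q.val ≤ N + 1 ∧ x = a ∧ q'.val = q.val + 1) ∨
      (N + 2 ≤ q.val ∧ x = b ∧ q'.val = N + 3)}
  F := {q | q.val = N + 3}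

lemma push_a_eq (σ : Fin k → Set α) (i : Fin k) (a : α)
    (hai : a ∈ σ i) (haj : ∀ j, a ∈ σ j → j = i) (bufs : Fin k → List α) :
    push σ bufs a = fun j => if j = i then bufs j ++ [a] else bufs j := by
  funext j
  by_cases h : j = i
  · subst h; simp [push, hai]
  · have : a ∉ σ j := fun hc => h (haj j hc)
    simp [push, this, h]

lemma not_simu (σ : Fin k → Set α) (κ : Fin k → ℕ∞) (i : Fin k) (a b : α) (N : ℕ)
    (hai : a ∈ σ i) (haj : ∀ j, a ∈ σ j → j = i)
    (j0 : Fin k) (hbj0 : b ∈ σ j0) (hj0i : j0 ≠ i)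
    (hκ : κ i = (N : ℕ∞)) :
    ¬ Simu σ κ (AutA N a b) (AutB N a b) := by
  rintro ⟨θ, H⟩
  have hA : AutA N a b = AutA N a b := rfl
  have hB : AutB N a b = AutB N a b := rfl
  set c0 : Conf α (AutA N a b).Q (AutB N a b).Q k :=
    ⟨(AutA N a b).init, fun _ => [], (AutB N a b).init⟩ with hc0
  set s : ℕ → α × (AutA N a b).Q := fun n => (a, ⟨min (n+1) (N+2), by omega⟩) with hs
  -- legality of Spoiler's move at round `m`, given the state of the configuration
  have legal_of : ∀ m, m ≤ N → (playConf σ θ c0 s m).p.val = m →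
      SpLegalAt σ (AutA N a b).δ θ c0 s m := by
    intro m hm hp
    unfold SpLegalAt SpLegal
    refine Or.inl ⟨by omega, rfl, ?_⟩
    show min (m+1) (N+2) = _
    omega
  -- the configurations of the forced play
  have key : ∀ n, n ≤ N + 1 →
      (playConf σ θ c0 s n).bufs = (fun j => if j = i then List.replicate n a else []) ∧
      (playConf σ θ c0 s n).q = (AutB N a b).init ∧
      (playConf σ θ c0 s n).p.val = n := by
    intro n
    induction n using Nat.strong_induction_on with
    | _ n ih =>
      match n with
      | 0 =>
        intro _
        refine ⟨?_, rfl, rfl⟩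
        funext j
        by_cases h : j = i <;> simp [playConf, c0, h]
      | Nat.succ n =>
        intro hn
        have ihn := ih n (by omega) (by omega)
        have legal : ∀ m ≤ n, SpLegalAt σ (AutA N a b).δ θ c0 s m := by
          intro m hm
          exact legal_of m (by omega) (ih m (by omega) (by omega)).2.2
        obtain ⟨hdl, hcap⟩ := (H s).1 n legal
        have hq0 : (spApply σ (playConf σ θ c0 s n) (s n)).q = (AutB N a b).init := ihn.2.1
        have hbufs0 : ∀ j, j ≠ i →
            (spApply σ (playConf σ θ c0 s n) (s n)).bufs j = [] := by
          intro j hj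
          show push σ (playConf σ θ c0 s n).bufs a j = []
          rw [push_a_eq σ i a hai haj, ihn.1]
          simp [hj]
        have hresp : resp θ s n = [] := by
          rcases hr : resp θ s n with _ | ⟨⟨x, q'⟩, rest⟩
          · rfl
          · exfalso
            rw [hr] at hdl
            obtain ⟨hq', hhead, -⟩ := hdl
            rw [hq0] at hq'
            simp only [hB, AutB, Set.mem_setOf_eq] at hq'
            have hx : x = b := by
              rcases hq' with ⟨-, hx, -⟩ | ⟨h1, -⟩ | ⟨h1, -⟩
              · exact hx
              · exact absurd h1 (by simp [AutB])
              · exact absurd h1 (by simp [AutB])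
            have := hhead j0 (hx ▸ hbj0)
            rw [hbufs0 j0 hj0i] at this
            simp at this
        have hstep : playConf σ θ c0 s (n+1) =
            spApply σ (playConf σ θ c0 s n) (s n) := by
          show dupApply σ _ (θ (hist s (n+1))) = _
          have : θ (hist s (n+1)) = [] := hresp
          rw [this]
          rfl
        refine ⟨?_, ?_, ?_⟩
        · rw [hstep]
          show push σ (playConf σ θ c0 s n).bufs a = _
          rw [push_a_eq σ i a hai haj, ihn.1]
          funext j
          by_cases h : j = i <;> simp [h, List.replicate_succ' (n := n) (a := a)]
        · rw [hstep]; exact hq0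
        · rw [hstep]
          show min (n+1) (N+2) = n + 1
          omega
  -- the contradiction with the capacity at round `N`
  have legal : ∀ m ≤ N, SpLegalAt σ (AutA N a b).δ θ c0 s m := fun m hm =>
    legal_of m hm (key m (by omega)).2.2
  obtain ⟨-, hcap⟩ := (H s).1 N legal
  have := hcap i
  rw [(key (N+1) le_rfl).1] at this
  simp only [if_true, eq_self_iff_true, List.length_replicate, hκ] at this
  exact absurd (Nat.cast_le.mp this) (by omega)

/-- The forced sequence of Spoiler moves: `a^{N+1} b^ω` with the unique run of `AutA`. -/
def forcedMove (N : ℕ) (a b : α) (n : ℕ) : α × (AutA N a b).Q :=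
  if h : n ≤ N then (a, ⟨n + 1, by omega⟩) else (b, ⟨N + 2, by omega⟩)

/-- Duplicator's big response after the first `b`: read `b`, then all `N+1` `a`s. -/
def D1 (N : ℕ) (a b : α) : List (α × (AutB N a b).Q) :=
  (b, ⟨1, by omega⟩) :: List.ofFn (fun t : Fin (N + 1) => (a, ⟨1 + t.val + 1, by omega⟩))

/-- Duplicator's response to a later `b`. -/
def D2 (N : ℕ) (a b : α) : List (α × (AutB N a b).Q) := [(b, ⟨N + 3, by omega⟩)]

/-- Duplicator's strategy. -/
def strat (N : ℕ) (a b : α) (l : List (α × (AutA N a b).Q)) : List (α × (AutB N a b).Q) :=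
  if l.map Prod.fst = List.replicate (N + 1) a ++ [b] then D1 N a b
  else if ∃ j : ℕ, l.map Prod.fst = List.replicate (N + 1) a ++ List.replicate (j + 2) b then
    D2 N a b
  else []

lemma hist_succ {β : Type} (s : ℕ → β) (n : ℕ) : hist s (n + 1) = hist s n ++ [s n] := by
  unfold hist
  rw [List.ofFn_succ']
  simp [List.concat_eq_append]

lemma hist_eq_of_agree {β : Type} (s s' : ℕ → β) (n : ℕ) (h : ∀ m < n, s m = s' m) :
    hist s n = hist s' n := by
  unfold hist
  congr 1
  funext t
  exact h t t.isLt

lemma hist_forced_map (N : ℕ) (a b : α) (n : ℕ) :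
    (hist (forcedMove N a b) n).map Prod.fst =
      List.replicate (min n (N + 1)) a ++ List.replicate (n - (N + 1)) b := by
  induction n with
  | zero => simp [hist]
  | succ n ih =>
    rw [hist_succ, List.map_append, ih]
    by_cases h : n ≤ N
    · have h1 : (forcedMove N a b n).1 = a := by simp [forcedMove, h]
      have h2 : min n (N + 1) = n := by omega
      have h3 : min (n + 1) (N + 1) = n + 1 := by omega
      have h4 : n - (N + 1) = 0 := by omega
      have h5 : n + 1 - (N + 1) = 0 := by omega
      simp [h1, h2, h3, h4, h5, List.replicate_succ' (n := n) (a := a), List.append_assoc]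
    · have h1 : (forcedMove N a b n).1 = b := by simp [forcedMove, h]
      have h2 : min n (N + 1) = N + 1 := by omega
      have h3 : min (n + 1) (N + 1) = N + 1 := by omega
      have h4 : n + 1 - (N + 1) = (n - (N + 1)) + 1 := by omega
      simp [h1, h2, h3, h4, List.replicate_succ' (n := n - (N + 1)) (a := b), List.append_assoc]

lemma strat_forced (N : ℕ) (a b : α) (hab : a ≠ b) (n : ℕ) :
    strat N a b (hist (forcedMove N a b) (n + 1)) =
      if n ≤ N then [] else if n = N + 1 then D1 N a b else D2 N a b := by
  have hmap := hist_forced_map N a b (n + 1)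
  unfold strat
  rw [hmap]
  by_cases h : n ≤ N
  · have h3 : min (n + 1) (N + 1) = n + 1 := by omega
    have h5 : n + 1 - (N + 1) = 0 := by omega
    rw [h3, h5]
    have hc1 : ¬ ((List.replicate (n+1) a ++ List.replicate 0 b : List α) =
        List.replicate (N + 1) a ++ [b]) := by
      intro hj
      have := congrArg List.length hj
      simp only [List.length_append, List.length_replicate, List.length_cons,
        List.length_nil] at this
      omega
    have hc2 : ¬ ∃ j : ℕ, (List.replicate (n+1) a ++ List.replicate 0 b : List α) =
        List.replicate (N + 1) a ++ List.replicate (j + 2) b := by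
      rintro ⟨j, hj⟩
      have := congrArg List.length hj
      simp only [List.length_append, List.length_replicate, List.length_cons,
        List.length_nil] at this
      omega
    rw [if_neg hc1, if_neg hc2, if_pos h]
  · by_cases h2 : n = N + 1
    · subst h2
      have h3 : min (N + 1 + 1) (N + 1) = N + 1 := by omega
      have h5 : N + 1 + 1 - (N + 1) = 1 := by omega
      rw [h3, h5, if_pos (by simp), if_neg (by omega), if_pos rfl]
    · have h3 : min (n + 1) (N + 1) = N + 1 := by omega
      have h5 : n + 1 - (N + 1) = (n - (N + 1) - 1) + 2 := by omega
      rw [h3, h5]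
      have hc1 : ¬ ((List.replicate (N+1) a ++ List.replicate (n - (N + 1) - 1 + 2) b :
          List α) = List.replicate (N + 1) a ++ [b]) := by
        intro hj
        have := congrArg List.length hj
        simp only [List.length_append, List.length_replicate, List.length_cons,
          List.length_nil] at this
        omega
      rw [if_neg hc1, if_pos ⟨n - (N + 1) - 1, rfl⟩, if_neg h, if_neg h2]

lemma pop_a_eq (σ : Fin k → Set α) (i : Fin k) (a : α)
    (hai : a ∈ σ i) (haj : ∀ j, a ∈ σ j → j = i) (bufs : Fin k → List α) :
    pop σ bufs a = fun j => if j = i then (bufs j).tail else bufs j := by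
  funext j
  by_cases h : j = i
  · subst h; simp [pop, hai]
  · have : a ∉ σ j := fun hc => h (haj j hc)
    simp [pop, this, h]

lemma foldl_pop_a {Q : Type} (σ : Fin k → Set α) (i : Fin k) (a : α)
    (hai : a ∈ σ i) (haj : ∀ j, a ∈ σ j → j = i) (L : List (α × Q))
    (hL : ∀ x ∈ L, x.1 = a) (bufs : Fin k → List α) :
    L.foldl (fun bs m => pop σ bs m.1) bufs =
      fun j => if j = i then (bufs j).drop L.length else bufs j := by
  induction L generalizing bufs with
  | nil => funext j; by_cases h : j = i <;> simp [h]
  | cons x L ih =>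
    have hx : x.1 = a := hL x (by simp)
    show L.foldl _ (pop σ bufs x.1) = _
    rw [hx, pop_a_eq σ i a hai haj, ih (fun y hy => hL y (by simp [hy]))]
    funext j
    by_cases h : j = i
    · simp [h, ← List.drop_one, List.drop_drop]
      congr 1
      omega
    · simp [h]

lemma arun_legal (σ : Fin k → Set α) (i : Fin k) (a b : α) (N : ℕ)
    (hai : a ∈ σ i) (haj : ∀ j, a ∈ σ j → j = i) :
    ∀ (m v : ℕ) (hv : 1 ≤ v) (hmv : v + m = N + 2) (p : (AutA N a b).Q)
      (q : (AutB N a b).Q) (hq : q.val = v),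
      DupLegal σ (AutB N a b).δ
        ⟨p, fun j => if j = i then List.replicate m a else [], q⟩
        (List.ofFn (fun t : Fin m => (a, ⟨v + t.val + 1, by omega⟩))) := by
  intro m
  induction m with
  | zero => intro v _ _ p q _; simp only [List.ofFn_zero]; trivial
  | succ m ih =>
    intro v hv hmv p q hq
    rw [List.ofFn_succ]
    refine ⟨?_, ?_, ?_⟩
    · show _ ∈ (AutB N a b).δ q a
      simp only [AutB, Set.mem_setOf_eq]
      refine Or.inr (Or.inl ⟨by omega, by omega, trivial, ?_⟩)
      simp [hq]
    · intro j hj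
      have hji : j = i := haj j hj
      subst hji
      simp [List.replicate_succ]
    · have hbufs : pop σ (fun j => if j = i then List.replicate (m + 1) a else []) a =
          fun j => if j = i then List.replicate m a else [] := by
        rw [pop_a_eq σ i a hai haj]
        funext j
        by_cases h : j = i <;> simp [h, List.replicate_succ]
      have hlist : List.ofFn (fun t : Fin m => (a, (⟨v + t.succ.val + 1, by omega⟩ :
              (AutB N a b).Q))) =
          List.ofFn (fun t : Fin m => (a, (⟨(v + 1) + t.val + 1, by omega⟩ :
              (AutB N a b).Q))) := by
        congr 1
        funext t
        refine Prod.ext rfl (Fin.ext ?_)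
        show v + (t.val + 1) + 1 = (v + 1) + t.val + 1
        omega
      show DupLegal σ (AutB N a b).δ ⟨p, pop σ _ a, _⟩ _
      rw [hbufs]
      have := ih (v + 1) (by omega) (by omega) p ⟨v + 0 + 1, by omega⟩ (by simp)
      exact (congrArg (DupLegal σ (AutB N a b).δ ⟨p, fun j => if j = i then List.replicate m a else [],
        (⟨v + 0 + 1, by omega⟩ : (AutB N a b).Q)⟩) hlist).mpr this

lemma D1_get_succ (N : ℕ) (a b : α) (t : ℕ) :
    (D1 N a b)[t+1]? = if h : t < N + 1 then
      some ((a, ⟨1 + t + 1, by omega⟩) : α × (AutB N a b).Q) else none := by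
  unfold D1
  rw [List.getElem?_cons_succ, List.getElem?_ofFn]

lemma D1_get_zero (N : ℕ) (a b : α) :
    (D1 N a b)[0]? = some ((b, ⟨1, by omega⟩) : α × (AutB N a b).Q) := by
  unfold D1
  rw [List.getElem?_cons_zero]

lemma D2_get (N : ℕ) (a b : α) (t : ℕ) :
    (D2 N a b)[t]? = if t = 0 then
      some ((b, ⟨N + 3, by omega⟩) : α × (AutB N a b).Q) else none := by
  match t with
  | 0 => rfl
  | t + 1 => rfl

lemma pos_simu (σ : Fin k → Set α) (κ' : Fin k → ℕ∞) (i : Fin k) (a b : α) (N : ℕ)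
    (hai : a ∈ σ i) (haj : ∀ j, a ∈ σ j → j = i) (hbi : b ∉ σ i) (hab : a ≠ b)
    (hκ' : ((N : ℕ∞) + 1) ≤ κ' i) :
    Simu σ κ' (AutA N a b) (AutB N a b) := by
  refine ⟨strat N a b, ?_⟩
  intro s
  set θ := strat N a b with hθ
  set c0 : Conf α (AutA N a b).Q (AutB N a b).Q k :=
    ⟨(AutA N a b).init, fun _ => [], (AutB N a b).init⟩ with hc0
  have hpsucc : ∀ n, (playConf σ θ c0 s (n+1)).p = (s n).2 := fun n => rfl
  -- legality forces Spoiler's moves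
  have forced_upto : ∀ n, (∀ m ≤ n, SpLegalAt σ (AutA N a b).δ θ c0 s m) →
      ∀ m ≤ n, s m = forcedMove N a b m := by
    intro n hleg m hm
    induction m using Nat.strong_induction_on with
    | _ m ih =>
      have hst : (playConf σ θ c0 s m).p.val = min m (N + 2) := by
        match m with
        | 0 => show (0 : ℕ) = min 0 (N + 2); omega
        | Nat.succ m' =>
          have hsm' : s m' = forcedMove N a b m' := ih m' (by omega) (by omega)
          rw [hpsucc m', hsm']
          unfold forcedMove
          by_cases h : m' ≤ N
          · rw [dif_pos h]; show m' + 1 = min (m' + 1) (N + 2); omega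
          · rw [dif_neg h]; show N + 2 = min (m' + 1) (N + 2); omega
      have hleg' := hleg m hm
      unfold SpLegalAt SpLegal at hleg'
      simp only [AutA, Set.mem_setOf_eq] at hleg'
      unfold forcedMove
      rcases hleg' with ⟨h1, hx, hv⟩ | ⟨h1, hx, hv⟩
      · have h1 : min m (N + 2) ≤ N := by rw [← hst]; exact h1
        have hv : (s m).2.val = min m (N + 2) + 1 := by rw [← hst]; exact hv
        have hm' : m ≤ N := by omega
        rw [dif_pos hm']
        refine Prod.ext hx (Fin.ext ?_)
        rw [hv]
        show min m (N + 2) + 1 = m + 1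
        omega
      · have h1 : N + 1 ≤ min m (N + 2) := by rw [← hst]; exact h1
        have hm' : ¬ m ≤ N := by omega
        rw [dif_neg hm']
        exact Prod.ext hx (Fin.ext (by rw [hv]))
  -- Duplicator's responses along forced plays
  have resp_spec : ∀ n, (∀ m ≤ n, s m = forcedMove N a b m) →
      resp θ s n = if n ≤ N then [] else if n = N + 1 then D1 N a b else D2 N a b := by
    intro n hfor
    have hh : hist s (n+1) = hist (forcedMove N a b) (n+1) :=
      hist_eq_of_agree _ _ _ (fun m hm => hfor m (by omega))
    show θ (hist s (n+1)) = _
    rw [hθ, hh, strat_forced N a b hab n]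
  -- the configurations along forced plays
  have conf_spec : ∀ n, (∀ m < n, s m = forcedMove N a b m) →
      ((playConf σ θ c0 s n).bufs =
        fun j => if j = i ∧ n ≤ N + 1 then List.replicate n a else []) ∧
      ((n ≤ N + 1 → (playConf σ θ c0 s n).q.val = 0) ∧
       (n = N + 2 → (playConf σ θ c0 s n).q.val = N + 2) ∧
       (N + 3 ≤ n → (playConf σ θ c0 s n).q.val = N + 3)) := by
    intro n
    induction n with
    | zero =>
      intro _
      refine ⟨?_, fun _ => rfl, fun h => absurd h (by omega), fun h => absurd h (by omega)⟩
      funext j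
      show ([] : List α) = _
      by_cases hj : j = i ∧ (0:ℕ) ≤ N + 1 <;> simp [hj]
    | succ n ih =>
      intro hfor
      have ihn := ih (fun m hm => hfor m (by omega))
      have hsn : s n = forcedMove N a b n := hfor n (by omega)
      have hresp := resp_spec n (fun m hm => hfor m (by omega))
      have hunf : playConf σ θ c0 s (n+1) =
          dupApply σ (spApply σ (playConf σ θ c0 s n) (s n)) (resp θ s n) := rfl
      by_cases h : n ≤ N
      · have hsa : s n = (a, ⟨n + 1, by omega⟩) := by
          rw [hsn]; unfold forcedMove; rw [dif_pos h]
        rw [hunf, hresp, if_pos h]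
        constructor
        · show push σ (playConf σ θ c0 s n).bufs (s n).1 = _
          rw [hsa]
          show push σ (playConf σ θ c0 s n).bufs a = _
          rw [push_a_eq σ i a hai haj, ihn.1]
          funext j
          by_cases hj : j = i
          · have c1 : j = i ∧ n ≤ N + 1 := ⟨hj, by omega⟩
            have c2 : j = i ∧ n + 1 ≤ N + 1 := ⟨hj, by omega⟩
            rw [if_pos hj]
            show (if j = i ∧ n ≤ N + 1 then List.replicate n a else []) ++ [a] =
              if j = i ∧ n + 1 ≤ N + 1 then List.replicate (n + 1) a else []
            rw [if_pos c1, if_pos c2]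
            exact (List.replicate_succ' (n := n) (a := a)).symm
          · simp [hj]
        · refine ⟨fun _ => ihn.2.1 (by omega), fun h2 => absurd h2 (by omega),
            fun h2 => absurd h2 (by omega)⟩
      · by_cases h2 : n = N + 1
        · subst h2
          have hsb : s (N+1) = (b, ⟨N + 2, by omega⟩) := by
            rw [hsn]; unfold forcedMove; rw [dif_neg (by omega)]
          rw [hunf, hresp, if_neg (by omega), if_pos rfl]
          have hbufs1 : (spApply σ (playConf σ θ c0 s (N+1)) (s (N+1))).bufs =
              fun j => if j = i then List.replicate (N+1) a
                else if b ∈ σ j then [b] else [] := by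
            show push σ (playConf σ θ c0 s (N+1)).bufs (s (N+1)).1 = _
            rw [hsb]
            show push σ (playConf σ θ c0 s (N+1)).bufs b = _
            rw [ihn.1]
            funext j
            by_cases hj : j = i
            · subst hj; simp [push, hbi]
            · by_cases hbj : b ∈ σ j <;> simp [push, hj, hbj]
          have hpopb : pop σ (fun j => if j = i then List.replicate (N+1) a
              else if b ∈ σ j then [b] else []) b =
              fun j => if j = i then List.replicate (N+1) a else [] := by
            funext j
            by_cases hj : j = i
            · subst hj; simp [pop, hbi]
            · by_cases hbj : b ∈ σ j <;> simp [pop, hj, hbj]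
          have hside : ∀ x ∈ List.ofFn (fun t : Fin (N+1) =>
              ((a, ⟨1 + t.val + 1, by omega⟩) : α × (AutB N a b).Q)), x.1 = a := by
            intro x hx
            rw [List.mem_ofFn] at hx
            obtain ⟨t, ht⟩ := hx
            rw [← ht]
          have hfold : (D1 N a b).foldl (fun bs (m : α × (AutB N a b).Q) => pop σ bs m.1)
              (fun j => if j = i then List.replicate (N+1) a
                else if b ∈ σ j then [b] else []) =
              fun j => if j = i ∧ N + 1 + 1 ≤ N + 1 then List.replicate (N+1+1) a
                else [] := by
            show (List.ofFn (fun t : Fin (N+1) =>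
                ((a, ⟨1 + t.val + 1, by omega⟩) : α × (AutB N a b).Q))).foldl
                (fun bs (m : α × (AutB N a b).Q) => pop σ bs m.1)
                (pop σ (fun j => if j = i then List.replicate (N+1) a
                  else if b ∈ σ j then [b] else []) b) = _
            rw [hpopb, foldl_pop_a σ i a hai haj _ hside]
            funext j
            by_cases hj : j = i
            · simp only [hj, if_pos rfl, List.length_ofFn]
              rw [List.drop_eq_nil_of_le (by simp)]
              simp [show ¬ (N + 1 + 1 ≤ N + 1) by omega]
            · simp [hj]
          constructor
          · show (D1 N a b).foldl (fun bs (m : α × (AutB N a b).Q) => pop σ bs m.1)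
              (spApply σ (playConf σ θ c0 s (N+1)) (s (N+1))).bufs = _
            rw [hbufs1, hfold]
          · refine ⟨fun h3 => absurd h3 (by omega), fun _ => ?_, fun h3 => absurd h3 (by omega)⟩
            show ((((D1 N a b).getLast?).map Prod.snd).getD (playConf σ θ c0 s (N+1)).q).val = N + 2
            have : (D1 N a b).getLast? =
                some ((a, ⟨1 + N + 1, by omega⟩) : α × (AutB N a b).Q) := by
              unfold D1
              rw [List.ofFn_succ', ← List.concat_cons, List.concat_eq_append,
                List.getLast?_concat]
              rfl
            rw [this]
            show (1 + N + 1) = N + 2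
            omega
        · have hn2 : N + 2 ≤ n := by omega
          have hsb : s n = (b, ⟨N + 2, by omega⟩) := by
            rw [hsn]; unfold forcedMove; rw [dif_neg h]
          rw [hunf, hresp, if_neg h, if_neg h2]
          have hbufs1 : (spApply σ (playConf σ θ c0 s n) (s n)).bufs =
              fun j => if b ∈ σ j then [b] else [] := by
            show push σ (playConf σ θ c0 s n).bufs (s n).1 = _
            rw [hsb]
            show push σ (playConf σ θ c0 s n).bufs b = _
            rw [ihn.1]
            funext j
            by_cases hbj : b ∈ σ j <;>
              simp [push, hbj, show ¬ n ≤ N + 1 by omega]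
          constructor
          · show (D2 N a b).foldl (fun bs (m : α × (AutB N a b).Q) => pop σ bs m.1)
              (spApply σ (playConf σ θ c0 s n) (s n)).bufs = _
            rw [hbufs1]
            show pop σ _ b = _
            funext j
            by_cases hbj : b ∈ σ j <;>
              simp [pop, hbj, show ¬ n + 1 ≤ N + 1 by omega]
          · refine ⟨fun h3 => absurd h3 (by omega), fun h3 => absurd h3 (by omega),
              fun _ => rfl⟩
  -- part 1: Duplicator always has legal moves
  constructor
  · intro n hleg
    have hfor : ∀ m ≤ n, s m = forcedMove N a b m := forced_upto n hleg
    have ihn := conf_spec n (fun m hm => hfor m (by omega))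
    have ihn1 := conf_spec (n+1) (fun m hm => hfor m (by omega))
    have hresp := resp_spec n hfor
    have hsn : s n = forcedMove N a b n := hfor n le_rfl
    constructor
    · -- DupLegal
      by_cases h : n ≤ N
      · rw [hresp, if_pos h]; trivial
      · by_cases h2 : n = N + 1
        · subst h2
          rw [hresp, if_neg (by omega), if_pos rfl]
          have hsb : s (N+1) = (b, ⟨N + 2, by omega⟩) := by
            rw [hsn]; unfold forcedMove; rw [dif_neg (by omega)]
          have hq0 : (spApply σ (playConf σ θ c0 s (N+1)) (s (N+1))).q.val = 0 :=
            ihn.2.1 le_rfl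
          have hbufs1 : (spApply σ (playConf σ θ c0 s (N+1)) (s (N+1))).bufs =
              fun j => if j = i then List.replicate (N+1) a
                else if b ∈ σ j then [b] else [] := by
            show push σ (playConf σ θ c0 s (N+1)).bufs (s (N+1)).1 = _
            rw [hsb]
            show push σ (playConf σ θ c0 s (N+1)).bufs b = _
            rw [ihn.1]
            funext j
            by_cases hj : j = i
            · subst hj; simp [push, hbi]
            · by_cases hbj : b ∈ σ j <;> simp [push, hj, hbj]
          refine ⟨?_, ?_, ?_⟩
          · show _ ∈ (AutB N a b).δ _ b
            exact Or.inl ⟨hq0, rfl, rfl⟩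
          · intro j hj
            rw [hbufs1]
            have hji : j ≠ i := fun hc => hbi (hc ▸ hj)
            simp [hji, hj]
          · have hpopb : pop σ (spApply σ (playConf σ θ c0 s (N+1)) (s (N+1))).bufs b =
                fun j => if j = i then List.replicate (N+1) a else [] := by
              rw [hbufs1]
              funext j
              by_cases hj : j = i
              · subst hj; simp [pop, hbi]
              · by_cases hbj : b ∈ σ j <;> simp [pop, hj, hbj]
            show DupLegal σ (AutB N a b).δ ⟨_, pop σ _ b, _⟩ (List.ofFn _)
            rw [hpopb]
            exact arun_legal σ i a b N hai haj (N+1) 1 (by omega) (by omega) _ _ rfl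
        · rw [hresp, if_neg h, if_neg h2]
          have hn2 : N + 2 ≤ n := by omega
          have hsb : s n = (b, ⟨N + 2, by omega⟩) := by
            rw [hsn]; unfold forcedMove; rw [dif_neg h]
          have hqv : N + 2 ≤ (spApply σ (playConf σ θ c0 s n) (s n)).q.val := by
            show N + 2 ≤ (playConf σ θ c0 s n).q.val
            by_cases h3 : n = N + 2
            · rw [ihn.2.2.1 h3]
            · rw [ihn.2.2.2 (by omega)]; omega
          have hbufs1 : (spApply σ (playConf σ θ c0 s n) (s n)).bufs =
              fun j => if b ∈ σ j then [b] else [] := by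
            show push σ (playConf σ θ c0 s n).bufs (s n).1 = _
            rw [hsb]
            show push σ (playConf σ θ c0 s n).bufs b = _
            rw [ihn.1]
            funext j
            by_cases hbj : b ∈ σ j <;>
              simp [push, hbj, show ¬ n ≤ N + 1 by omega]
          refine ⟨?_, ?_, trivial⟩
          · show _ ∈ (AutB N a b).δ _ b
            exact Or.inr (Or.inr ⟨hqv, rfl, rfl⟩)
          · intro j hj
            rw [hbufs1]
            simp [hj]
    · -- CapOk
      intro j
      rw [congrFun ihn1.1 j]
      by_cases hc : j = i ∧ n + 1 ≤ N + 1
      · rw [if_pos hc]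
        rw [hc.1]
        simp only [List.length_replicate]
        calc ((n + 1 : ℕ) : ℕ∞) ≤ ((N + 1 : ℕ) : ℕ∞) := Nat.cast_le.mpr (by omega)
          _ = (N : ℕ∞) + 1 := by push_cast; rfl
          _ ≤ κ' i := hκ'
      · rw [if_neg hc]
        simp
  -- part 2: the winning condition
  · intro hleg _
    have hfor : ∀ m, s m = forcedMove N a b m := fun m =>
      forced_upto m (fun m' _ => hleg m') m le_rfl
    have hrespn : ∀ n, resp θ s n =
        if n ≤ N then [] else if n = N + 1 then D1 N a b else D2 N a b :=
      fun n => resp_spec n (fun m _ => hfor m)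
    constructor
    · -- DupAccept
      refine Set.Infinite.mono ?_ (Set.Ici_infinite (N+2))
      intro n hn
      have hn' : N + 2 ≤ n := hn
      show ∃ m ∈ resp θ s n, m.2 ∈ (AutB N a b).F
      rw [hrespn n, if_neg (by omega), if_neg (by omega)]
      exact ⟨(b, ⟨N + 3, by omega⟩), by simp [D2], rfl⟩
    · -- occurrence counts
      intro x
      unfold spOcc dupOcc
      by_cases hxa : x = a
      · rw [hxa]
        have hset : {n | (s n).1 = a} = ↑(Finset.Iic N) := by
          ext n
          simp only [Set.mem_setOf_eq, Finset.coe_Iic, Set.mem_Iic]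
          rw [hfor n]
          unfold forcedMove
          by_cases h : n ≤ N
          · simp [h]
          · simp [h, Ne.symm hab]
        have hset2 : {p : ℕ × ℕ | ∃ m, (resp θ s p.1)[p.2]? = some m ∧ m.1 = a} =
            ↑(Finset.image (fun t => ((N+1 : ℕ), t + 1)) (Finset.range (N+1))) := by
          ext ⟨n, t⟩
          simp only [Set.mem_setOf_eq, Finset.coe_image, Finset.coe_range, Set.mem_image,
            Set.mem_Iio]
          constructor
          · rintro ⟨m, hm, hma⟩
            rw [hrespn n] at hm
            split_ifs at hm with h h2
            · simp at hm
            · subst h2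
              match t with
              | 0 =>
                rw [D1_get_zero] at hm
                injection hm with hm'
                rw [← hm'] at hma
                exact absurd hma (Ne.symm hab)
              | t + 1 =>
                rw [D1_get_succ] at hm
                split_ifs at hm with ht
                exact ⟨t, ht, rfl⟩
            · rw [D2_get] at hm
              split_ifs at hm with ht
              injection hm with hm'
              rw [← hm'] at hma
              exact absurd hma (Ne.symm hab)
          · rintro ⟨t', ht', heq⟩
            obtain ⟨h1, h2⟩ := Prod.mk.inj heq
            subst h1
            subst h2
            refine ⟨(a, ⟨1 + t' + 1, by omega⟩), ?_, rfl⟩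
            rw [hrespn (N+1), if_neg (by omega), if_pos rfl, D1_get_succ, dif_pos ht']
        rw [hset, hset2, Set.encard_coe_eq_coe_finsetCard, Set.encard_coe_eq_coe_finsetCard,
          Nat.card_Iic, Finset.card_image_of_injective _ (fun x y h => by simpa using h),
          Finset.card_range]
      · by_cases hxb : x = b
        · rw [hxb]
          have h1 : {n | (s n).1 = b}.Infinite := by
            refine Set.Infinite.mono ?_ (Set.Ici_infinite (N+1))
            intro n hn
            have hn' : N + 1 ≤ n := hn
            show (s n).1 = b
            rw [hfor n]
            unfold forcedMove
            rw [dif_neg (by omega)]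
          have h2 : {p : ℕ × ℕ | ∃ m, (resp θ s p.1)[p.2]? = some m ∧ m.1 = b}.Infinite := by
            refine Set.Infinite.mono ?_
              ((Set.Ici_infinite (N+2)).image (f := fun n => ((n : ℕ), (0 : ℕ)))
                (fun x _ y _ h => by simpa using h))
            rintro ⟨n, t⟩ ⟨n', hn', heq⟩
            obtain ⟨h1, h2⟩ := Prod.mk.inj heq
            subst h1
            subst h2
            have hn2 : N + 2 ≤ n' := hn'
            refine ⟨(b, ⟨N + 3, by omega⟩), ?_, rfl⟩
            rw [hrespn n', if_neg (by omega), if_neg (by omega), D2_get, if_pos rfl]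
          rw [h1.encard_eq, h2.encard_eq]
        · have h1 : {n | (s n).1 = x} = ∅ := by
            ext n
            simp only [Set.mem_setOf_eq, Set.mem_empty_iff_false, iff_false]
            rw [hfor n]
            unfold forcedMove
            by_cases h : n ≤ N
            · rw [dif_pos h]; exact fun hc => hxa hc.symm
            · rw [dif_neg h]; exact fun hc => hxb hc.symm
          have h2 : {p : ℕ × ℕ | ∃ m, (resp θ s p.1)[p.2]? = some m ∧ m.1 = x} = ∅ := by
            ext ⟨n, t⟩
            simp only [Set.mem_setOf_eq, Set.mem_empty_iff_false, iff_false]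
            rintro ⟨m, hm, hmx⟩
            rw [hrespn n] at hm
            split_ifs at hm with h h2'
            · simp at hm
            · match t with
              | 0 =>
                rw [D1_get_zero] at hm
                injection hm with hm'
                rw [← hm'] at hmx
                exact hxb hmx.symm
              | t + 1 =>
                rw [D1_get_succ] at hm
                split_ifs at hm with ht
                injection hm with hm'
                rw [← hm'] at hmx
                exact hxa hmx.symm
            · rw [D2_get] at hm
              split_ifs at hm with ht
              injection hm with hm'
              rw [← hm'] at hmx
              exact hxb hmx.symm
          rw [h1, h2, Set.encard_empty, Set.encard_empty]

end Strict

/-- **Theorem (strictness of the capacity hierarchy).**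
Let `σ = (Σ_i)_{i∈[k]}` be a trace alphabet and `κ, κ'` capacity functions for `k`
buffers. Suppose there are `i ∈ [k]` and letters `a, b` such that `σ(a) = {i}`,
`σ(a) ∩ σ(b) = ∅`, `κ i` is finite and `κ i < κ' i`. Then there are NBA `A` and `B`
over `α` such that `A ⋢^κ_σ B` but `A ⊑^{κ'}_σ B`. -/
theorem exists_simu_strict {α : Type} [Fintype α] {k : ℕ}
    (σ : Fin k → Set α) (hcov : ∀ x : α, ∃ i, x ∈ σ i)
    (κ κ' : Fin k → ℕ∞) (i : Fin k) (a b : α)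
    (ha : {j | a ∈ σ j} = {i})
    (hab : {j | a ∈ σ j} ∩ {j | b ∈ σ j} = ∅)
    (hfin : κ i ≠ ⊤) (hlt : κ i < κ' i) :
    ∃ A B : NBA α, ¬ Simu σ κ A B ∧ Simu σ κ' A B := by
  have hai : a ∈ σ i := by
    have : i ∈ {j | a ∈ σ j} := by rw [ha]; exact rfl
    exact this
  have haj : ∀ j, a ∈ σ j → j = i := fun j hj => by
    have : j ∈ {j | a ∈ σ j} := hj
    rw [ha] at this
    exact this
  have hbi : b ∉ σ i := fun hb => by
    have : i ∈ ({j | a ∈ σ j} ∩ {j | b ∈ σ j}) := ⟨hai, hb⟩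
    rw [hab] at this
    exact this
  obtain ⟨j0, hbj0⟩ := hcov b
  have hj0i : j0 ≠ i := fun h => hbi (h ▸ hbj0)
  have habne : a ≠ b := fun h => hbi (h ▸ hai)
  obtain ⟨N, hN⟩ : ∃ N : ℕ, κ i = (N : ℕ∞) := by
    cases hk : κ i with
    | top => exact absurd hk hfin
    | coe n => exact ⟨n, rfl⟩
  have hκ' : (N : ℕ∞) + 1 ≤ κ' i := by
    rw [hN] at hlt
    exact (ENat.add_one_le_iff (ENat.coe_ne_top N)).mpr hlt
  exact ⟨AutA N a b, AutB N a b,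
    not_simu σ κ i a b N hai haj j0 hbj0 hj0i hN,
    pos_simu σ κ' i a b N hai haj hbi habne hκ'⟩

end MultiBuffer
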